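/- Let K be an infinite field and give S = K[x,y] the standard grading deg(x) = deg(y) = 1. Let h : ℤ_{≥0} → ℤ_{≥0} be the Hilbert function of some monomial ideal of S of finite colength. Then there exists a homogeneous ideal I ⊆ S with dim_K (S/I)_d = h(d) for all d ≥ 0 such that for every d ≥ 0, every nonzero homogeneous polynomial in I of degree d has at least h(d) + 1 monomials in its support. (Equivalently, for every d ≥ 0 the degree-d matroid M(I_d) of the tropicalization of I is the uniform matroid U_{h(d), d+1}.) -/

import Mathlib

/-!
Combinatorial framework for monomial ideals in `K[x,y]`, graded by
`deg x = a`, `deg y = b`.  A monomial `x^α y^β` is represented by the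
pair `(α, β) : ℤ × ℤ`; it lies in `S = K[x,y]` when both entries are
nonnegative.
-/

namespace MonId

/-- A (Laurent) monomial `x^α y^β`, represented by its exponent vector. -/
abbrev Mon : Type := ℤ × ℤ

/-- `p` is a genuine monomial of `S = K[x,y]` (nonnegative exponents). -/
def inS (p : Mon) : Prop := 0 ≤ p.1 ∧ 0 ≤ p.2

/-- `M` is (the set of monomials of) a monomial ideal of `S` of finite
colength: it consists of monomials of `S`, is closed under multiplication
by `x` and by `y`, and its complement in the monomials of `S` is finite. -/
def IsMonIdeal (M : Set Mon) : Prop :=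
  (∀ p ∈ M, inS p) ∧
  (∀ p ∈ M, (p.1 + 1, p.2) ∈ M ∧ (p.1, p.2 + 1) ∈ M) ∧
  {p : Mon | inS p ∧ p ∉ M}.Finite

/-- `p` is a minimal monomial generator of the monomial ideal `M`. -/
def IsMinGen (M : Set Mon) (p : Mon) : Prop :=
  p ∈ M ∧ (p.1 - 1, p.2) ∉ M ∧ (p.1, p.2 - 1) ∉ M

/-- `m 0, m 1, …, m e` is the list of minimal generators of `M`, in
increasing lexicographic order `≺` with `x ≺ y` (equivalently, with
strictly increasing `y`-exponents). -/
def IsGenSeq (M : Set Mon) (e : ℕ) (m : ℕ → Mon) : Prop :=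
  (∀ k ≤ e, IsMinGen M (m k)) ∧
  (∀ k, k < e → (m k).2 < (m (k + 1)).2) ∧
  (∀ p, IsMinGen M p → ∃ k ≤ e, m k = p)

/-- Multiplication of the monomial `p` by `r^ℓ`, where `r = x^b y^{-a}`. -/
def rpow (a b ℓ : ℤ) (p : Mon) : Mon := (p.1 + b * ℓ, p.2 - a * ℓ)

/-- `w m i` is `w_i = lcm(m_{i-1}, m_i)` (componentwise max of exponents). -/
def w (m : ℕ → Mon) (i : ℕ) : Mon :=
  (max (m (i - 1)).1 (m i).1, max (m (i - 1)).2 (m i).2)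

/-- The set `T⁺(M)` of positive significant arrows `(i, ℓ)`:
`1 ≤ i ≤ e`, `ℓ ≥ 1`, `m_i r^ℓ ∈ S ∖ M` and `w_i r^ℓ ∈ M`. -/
def Tplus (a b : ℤ) (M : Set Mon) (e : ℕ) (m : ℕ → Mon) : Set (ℕ × ℤ) :=
  {q | 1 ≤ q.1 ∧ q.1 ≤ e ∧ 1 ≤ q.2 ∧ inS (rpow a b q.2 (m q.1)) ∧
    rpow a b q.2 (m q.1) ∉ M ∧ rpow a b q.2 (w m q.1) ∈ M}

/-- The set `T⁻(M)` of negative significant arrows `(i, ℓ)`: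
`0 ≤ i ≤ e - 1`, `ℓ ≤ -1`, `m_i r^ℓ ∈ S ∖ M` and `w_{i+1} r^ℓ ∈ M`. -/
def Tminus (a b : ℤ) (M : Set Mon) (e : ℕ) (m : ℕ → Mon) : Set (ℕ × ℤ) :=
  {q | q.1 < e ∧ q.2 ≤ -1 ∧ inS (rpow a b q.2 (m q.1)) ∧
    rpow a b q.2 (m q.1) ∉ M ∧ rpow a b q.2 (w m (q.1 + 1)) ∈ M}

/-- `j⁺(p) = max {i : m_i divides p}`. -/
def jplus (e : ℕ) (m : ℕ → Mon) (p : Mon) : ℕ :=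
  Nat.findGreatest (fun i => (m i).1 ≤ p.1 ∧ (m i).2 ≤ p.2) e

/-- `j⁻(p) = min {i : m_i divides p}`. -/
noncomputable def jminus (e : ℕ) (m : ℕ → Mon) (p : Mon) : ℕ :=
  sInf {i | i ≤ e ∧ (m i).1 ≤ p.1 ∧ (m i).2 ≤ p.2}

/-- `IsPath a b M e m i P`: `P` is a path from the generator `m_i`, i.e. a
finite sequence of positive significant arrows whose first arrow `(i₁, ℓ₁)`
has `i₁ ≤ i`, and whose tail is a path from `m_{j⁺(w_{i₁} r^{ℓ₁})}`.
The empty sequence is a path from every generator. -/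
def IsPath (a b : ℤ) (M : Set Mon) (e : ℕ) (m : ℕ → Mon) : ℕ → List (ℕ × ℤ) → Prop
  | _, [] => True
  | i, q :: rest => q ∈ Tplus a b M e m ∧ q.1 ≤ i ∧
      IsPath a b M e m (jplus e m (rpow a b q.2 (w m q.1))) rest

/-- The length `l(P) = ℓ₁ + ⋯ + ℓ_s` of a path. -/
def llen (P : List (ℕ × ℤ)) : ℤ := (P.map Prod.snd).sum

/-- `lm j` is the largest `ℓ` with `(j, ℓ) ∈ T⁺(M)`, and is `0` when no
such arrow exists. -/
def IsLmax (Tp : Set (ℕ × ℤ)) (lm : ℕ → ℤ) : Prop :=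
  ∀ j : ℕ, (∀ ℓ : ℤ, (j, ℓ) ∈ Tp → ℓ ≤ lm j) ∧
    ((∃ ℓ : ℤ, (j, ℓ) ∈ Tp) → (j, lm j) ∈ Tp) ∧
    ((¬ ∃ ℓ : ℤ, (j, ℓ) ∈ Tp) → lm j = 0)

/-- `IsZSeq a b e m lm k L`: `L` is the sequence `(z_1, z_2, …)` of arrows
produced by the greedy procedure started at index `k`: while `i ≥ 1`, if
`ℓ_i > 0` record the arrow `(i, ℓ_i)` and jump to `j⁺(w_i r^{ℓ_i})`,
otherwise decrease `i` by one; stop when `i ≤ 0`. -/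
inductive IsZSeq (a b : ℤ) (e : ℕ) (m : ℕ → Mon) (lm : ℕ → ℤ) : ℕ → List (ℕ × ℤ) → Prop where
  | zero : IsZSeq a b e m lm 0 []
  | skip {i : ℕ} {L : List (ℕ × ℤ)} : 1 ≤ i → lm i ≤ 0 →
      IsZSeq a b e m lm (i - 1) L → IsZSeq a b e m lm i L
  | step {i : ℕ} {L : List (ℕ × ℤ)} : 1 ≤ i → 0 < lm i →
      IsZSeq a b e m lm (jplus e m (rpow a b (lm i) (w m i))) L →
      IsZSeq a b e m lm i ((i, lm i) :: L)

/-- `D` is a direct path from `m_k`: a path which is either a nonempty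
initial segment `(z_1, …, z_s)` of the greedy sequence from `k`, or
`(z_1, …, z_s, (i', ℓ'))` where `i'` is the index of `z_{s+1}` and
`1 ≤ ℓ' < ℓ_{i'}`. -/
def IsDirectPath (a b : ℤ) (M : Set Mon) (e : ℕ) (m : ℕ → Mon) (lm : ℕ → ℤ)
    (k : ℕ) (D : List (ℕ × ℤ)) : Prop :=
  IsPath a b M e m k D ∧
  ∃ L, IsZSeq a b e m lm k L ∧
    ((∃ s : ℕ, 0 < s ∧ s ≤ L.length ∧ D = L.take s) ∨
     (∃ (s : ℕ) (z : ℕ × ℤ) (ℓ' : ℤ), L[s]? = some z ∧ 1 ≤ ℓ' ∧ ℓ' < z.2 ∧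
       D = L.take s ++ [(z.1, ℓ')]))

/-- The monomial `c_P = c_{i₁}^{ℓ₁} ⋯ c_{i_s}^{ℓ_s}` associated to a path,
as an element of the polynomial ring with variables `c_i^ℓ` (indexed by
pairs `(i, ℓ)`). -/
noncomputable def cP (K : Type*) [CommSemiring K] (P : List (ℕ × ℤ)) : MvPolynomial (ℕ × ℤ) K :=
  (P.map MvPolynomial.X).prod

end MonId

namespace MonId

/-- The monomial `x^α y^β` of `K[x,y] = K[X 0, X 1]` associated to
`p = (α, β)`. -/
noncomputable def monOf (K : Type*) [CommSemiring K] (p : Mon) :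
    MvPolynomial (Fin 2) K :=
  MvPolynomial.X 0 ^ p.1.toNat * MvPolynomial.X 1 ^ p.2.toNat

/-- The ideal of `K[x,y]` generated by the monomials in `A`. -/
noncomputable def idealOf (K : Type*) [CommSemiring K] (A : Set Mon) :
    Ideal (MvPolynomial (Fin 2) K) :=
  Ideal.span (monOf K '' A)

/-- The Hilbert function of `K[x,y]/I` for the grading with
`deg x = wt 0`, `deg y = wt 1`: the `K`-dimension of the image of the
space of weighted-degree-`d` homogeneous polynomials in the quotient. -/
noncomputable def HF (K : Type*) [CommRing K] (wt : Fin 2 → ℕ)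
    (I : Ideal (MvPolynomial (Fin 2) K)) (d : ℕ) : ℕ :=
  Module.finrank K
    ((MvPolynomial.weightedHomogeneousSubmodule K wt d).map
      (Ideal.Quotient.mkₐ K I).toLinearMap)

/-- The lexicographic order on exponent vectors with `x ≺ y` (compare the
exponent of `y` first).  `lexYle s t` means `s ⪯ t`. -/
def lexYle (s t : Fin 2 →₀ ℕ) : Prop := s 1 < t 1 ∨ (s 1 = t 1 ∧ s 0 ≤ t 0)

/-- The lexicographic order on exponent vectors with `y ≺ x` (compare the
exponent of `x` first).  `lexXle s t` means `s ⪯ t`. -/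
def lexXle (s t : Fin 2 →₀ ℕ) : Prop := s 0 < t 0 ∨ (s 0 = t 0 ∧ s 1 ≤ t 1)

/-- The initial ideal of `I` for a monomial order `le`: the ideal
generated by the `le`-largest monomials of the nonzero elements of `I`. -/
noncomputable def initialIdeal (K : Type*) [CommSemiring K]
    (le : (Fin 2 →₀ ℕ) → (Fin 2 →₀ ℕ) → Prop)
    (I : Ideal (MvPolynomial (Fin 2) K)) : Ideal (MvPolynomial (Fin 2) K) :=
  Ideal.span {g | ∃ f ∈ I, f ≠ 0 ∧ ∃ s ∈ f.support,
    (∀ t ∈ f.support, le t s) ∧ g = MvPolynomial.monomial s (1 : K)}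

end MonId

open MonId

open MvPolynomial Finset

namespace GenAux

variable {K : Type*} [Field K]

noncomputable def ms (a b : ℕ) : Fin 2 →₀ ℕ := Finsupp.single 0 a + Finsupp.single 1 b

@[simp] lemma ms_apply0 (a b : ℕ) : ms a b 0 = a := by
  simp [ms, Finsupp.single_apply]

@[simp] lemma ms_apply1 (a b : ℕ) : ms a b 1 = b := by
  simp [ms, Finsupp.single_apply]

lemma eq_ms (s : Fin 2 →₀ ℕ) : s = ms (s 0) (s 1) := by
  ext i
  fin_cases i
  · simp
  · simp

lemma ms_degree (a b : ℕ) : (ms a b).degree = a + b := by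
  rw [Finsupp.degree_apply]
  rw [Finset.sum_subset (Finset.subset_univ _) (by intro x _ hx; simpa using hx)]
  rw [Fin.sum_univ_two, ms_apply0, ms_apply1]

lemma ms_inj {a b a' b' : ℕ} (h : ms a b = ms a' b') : a = a' ∧ b = b' := by
  constructor
  · have := congrArg (fun s => s 0) h; simpa using this
  · have := congrArg (fun s => s 1) h; simpa using this

lemma wt_eq_one : (![1,1] : Fin 2 → ℕ) = 1 := by
  funext i; fin_cases i <;> rfl

lemma whs_eq (d : ℕ) :
    weightedHomogeneousSubmodule K ![1,1] d = homogeneousSubmodule (Fin 2) K d := by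
  rw [wt_eq_one]; rfl

lemma support_deg {d : ℕ} {f : MvPolynomial (Fin 2) K}
    (hf : f ∈ homogeneousSubmodule (Fin 2) K d) {s : Fin 2 →₀ ℕ}
    (hs : coeff s f ≠ 0) : s 0 + s 1 = d := by
  rw [mem_homogeneousSubmodule] at hf
  have := hf hs
  change Finsupp.weight (fun _ => 1) s = d at this
  rw [← Finsupp.degree_eq_weight_one] at this
  rw [← this, eq_ms s, ms_degree, ms_apply0, ms_apply1]

/-- the linear map sending coordinates to a homogeneous polynomial of degree d -/
noncomputable def phi (K : Type*) [Field K] (d : ℕ) :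
    (Fin (d+1) → K) →ₗ[K] MvPolynomial (Fin 2) K :=
  ∑ e : Fin (d+1), (monomial (ms e (d - e))).comp (LinearMap.proj e)

lemma phi_apply (d : ℕ) (v : Fin (d+1) → K) :
    phi K d v = ∑ e : Fin (d+1), monomial (ms e (d - e)) (v e) := by
  simp [phi, LinearMap.sum_apply]

lemma coeff_phi (d : ℕ) (v : Fin (d+1) → K) (a b : ℕ) :
    coeff (ms a b) (phi K d v) = if h : a + b = d then v ⟨a, by omega⟩ else 0 := by
  rw [phi_apply, coeff_sum]
  split
  · rename_i hab
    have hb : b = d - a := by omega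
    subst hb
    rw [Finset.sum_eq_single (⟨a, by omega⟩ : Fin (d+1))]
    · rw [coeff_monomial, if_pos rfl]
    · intro e _ hne
      rw [coeff_monomial, if_neg]
      intro heq
      obtain ⟨h1, h2⟩ := ms_inj heq
      exact hne (by ext; simp [h1])
    · intro h; exact absurd (Finset.mem_univ _) h
  · rename_i hab
    apply Finset.sum_eq_zero
    intro e _
    rw [coeff_monomial, if_neg]
    intro heq
    obtain ⟨h1, h2⟩ := ms_inj heq
    omega


lemma phi_injective (d : ℕ) : Function.Injective (phi K d) := by
  rw [injective_iff_map_eq_zero]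
  intro v hv
  funext e
  have := coeff_phi d v e (d - e)
  rw [hv, dif_pos (by omega)] at this
  simp only [coeff_zero] at this
  rw [show (⟨(e : ℕ), by omega⟩ : Fin (d+1)) = e by ext; rfl] at this
  exact this.symm

lemma phi_mem (d : ℕ) (v : Fin (d+1) → K) :
    phi K d v ∈ homogeneousSubmodule (Fin 2) K d := by
  rw [phi_apply]
  apply Submodule.sum_mem
  intro e _
  rw [mem_homogeneousSubmodule]
  exact isHomogeneous_monomial _ (by rw [ms_degree]; omega)

lemma phi_surj {d : ℕ} {f : MvPolynomial (Fin 2) K}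
    (hf : f ∈ homogeneousSubmodule (Fin 2) K d) :
    phi K d (fun e => coeff (ms e (d - e)) f) = f := by
  ext s
  rw [eq_ms s, coeff_phi]
  split
  · rename_i hs
    simp only [Fin.val_mk]
    congr 2
    omega
  · rename_i hs
    rw [← eq_ms s]
    by_contra hc
    exact absurd (support_deg hf (fun h => hc h.symm)) hs

lemma range_phi (d : ℕ) :
    LinearMap.range (phi K d) = (homogeneousSubmodule (Fin 2) K d) := by
  apply le_antisymm
  · rintro _ ⟨v, rfl⟩
    exact phi_mem d v
  · intro f hf
    exact ⟨_, phi_surj hf⟩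

/-- evaluation at (t, 1) as a K-linear map -/
noncomputable def ev (t : K) : MvPolynomial (Fin 2) K →ₗ[K] K where
  toFun f := eval ![t, 1] f
  map_add' := by simp
  map_smul' := by simp [smul_eq_C_mul]

lemma ev_apply (t : K) (f : MvPolynomial (Fin 2) K) : ev t f = eval ![t, 1] f := rfl

lemma ev_monomial (t : K) (a b : ℕ) (c : K) :
    ev t (monomial (ms a b) c) = c * t ^ a := by
  rw [ev_apply, eval_monomial, ms]
  rw [Finsupp.prod_add_index (by simp) (by intros; rw [pow_add])]
  simp [Finsupp.prod_single_index]

lemma ev_phi (t : K) (d : ℕ) (v : Fin (d+1) → K) :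
    ev t (phi K d v) = ∑ e : Fin (d+1), v e * t ^ (e : ℕ) := by
  rw [phi_apply, map_sum]
  exact Finset.sum_congr rfl fun e _ => ev_monomial t e (d - e) (v e)

lemma ev_mul_X (t : K) (j : Fin 2) (f : MvPolynomial (Fin 2) K) :
    ev t (X j * f) = ![t, 1] j * ev t f := by
  rw [ev_apply, eval_mul, eval_X]; rfl

lemma finrank_Sd (d : ℕ) :
    Module.finrank K (homogeneousSubmodule (Fin 2) K d) = d + 1 := by
  have h1 : Module.finrank K (LinearMap.range (phi K d)) = d + 1 := by
    rw [LinearMap.finrank_range_of_inj (phi_injective d), Module.finrank_pi, Fintype.card_fin]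
  rw [range_phi] at h1
  exact h1

instance fd_Sd (d : ℕ) : FiniteDimensional K (homogeneousSubmodule (Fin 2) K d) := by
  have h : FiniteDimensional K (LinearMap.range (phi K d)) := inferInstance
  rw [range_phi] at h
  exact h

/-- the space of homogeneous degree-d polys vanishing at (c i, 1) for i < k -/
noncomputable def Vd (c : ℕ → K) (k d : ℕ) : Submodule K (MvPolynomial (Fin 2) K) :=
  (homogeneousSubmodule (Fin 2) K d) ⊓ ⨅ i : Fin k, LinearMap.ker (ev (c i))

lemma mem_Vd_iff {c : ℕ → K} {k d : ℕ} {f : MvPolynomial (Fin 2) K} :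
    f ∈ Vd c k d ↔ f ∈ homogeneousSubmodule (Fin 2) K d ∧ ∀ i : Fin k, ev (c i) f = 0 := by
  simp [Vd, Submodule.mem_iInf]

noncomputable def Phi (c : ℕ → K) (k d : ℕ) : (Fin (d+1) → K) →ₗ[K] (Fin k → K) :=
  LinearMap.pi (fun i => (ev (c i)).comp (phi K d))

lemma Phi_apply (c : ℕ → K) (k d : ℕ) (v : Fin (d+1) → K) (i : Fin k) :
    Phi c k d v i = ev (c i) (phi K d v) := rfl

lemma Vd_eq_map (c : ℕ → K) (k d : ℕ) :
    Vd c k d = (LinearMap.ker (Phi c k d)).map (phi K d) := by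
  ext f
  rw [mem_Vd_iff, Submodule.mem_map]
  constructor
  · rintro ⟨h1, h2⟩
    refine ⟨fun e => coeff (ms e (d - e)) f, ?_, phi_surj h1⟩
    rw [LinearMap.mem_ker]
    funext i
    rw [Pi.zero_apply, Phi_apply, phi_surj h1]
    exact h2 i
  · rintro ⟨v, hv, rfl⟩
    refine ⟨phi_mem d v, fun i => ?_⟩
    rw [← Phi_apply c k d v i, LinearMap.mem_ker.mp hv]
    rfl

lemma Phi_surjective {c : ℕ → K} {k d : ℕ} (hk : k ≤ d + 1)
    (hc : Function.Injective (fun i : Fin k => c i)) :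
    Function.Surjective (Phi c k d) := by
  intro u
  set M : Matrix (Fin k) (Fin k) K := Matrix.vandermonde (fun i : Fin k => c i) with hM
  have hdet : M.det ≠ 0 := Matrix.det_vandermonde_ne_zero_iff.mpr hc
  set w : Fin k → K := M⁻¹.mulVec u with hw
  refine ⟨fun e => if h : (e : ℕ) < k then w ⟨e, h⟩ else 0, ?_⟩
  funext i
  rw [Phi_apply, ev_phi]
  have step1 : (∑ e : Fin (d+1), (if h : (e : ℕ) < k then w ⟨(e : ℕ), h⟩ else 0) * c i ^ (e : ℕ))
      = ∑ j : Fin k, c i ^ (j : ℕ) * w j := by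
    rw [Fin.sum_univ_eq_sum_range (fun n => (if h : n < k then w ⟨n, h⟩ else 0) * c i ^ n) (d+1)]
    rw [← Finset.sum_subset (Finset.range_subset_range.mpr hk)
      (fun x _ hx => by rw [dif_neg (by simpa using hx), zero_mul])]
    rw [← Fin.sum_univ_eq_sum_range (fun n => (if h : n < k then w ⟨n, h⟩ else 0) * c i ^ n) k]
    apply Finset.sum_congr rfl
    intro j _
    rw [dif_pos j.isLt, mul_comm]
  rw [step1]
  have hMw : M.mulVec w = u := by
    rw [hw, Matrix.mulVec_mulVec, Matrix.mul_nonsing_inv M (isUnit_iff_ne_zero.mpr hdet),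
      Matrix.one_mulVec]
  calc (∑ j : Fin k, c i ^ (j : ℕ) * w j) = M.mulVec w i := by
        simp [Matrix.mulVec, dotProduct, hM]
    _ = u i := by rw [hMw]

lemma finrank_Vd {c : ℕ → K} {k d : ℕ} (hk : k ≤ d + 1)
    (hc : Function.Injective (fun i : Fin k => c i)) :
    Module.finrank K (Vd c k d) = d + 1 - k := by
  have hrn := LinearMap.finrank_range_add_finrank_ker (Phi c k d)
  rw [LinearMap.range_eq_top.mpr (Phi_surjective hk hc), finrank_top, Module.finrank_pi,
    Module.finrank_pi, Fintype.card_fin, Fintype.card_fin] at hrn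
  have h2 : Module.finrank K (Vd c k d)
      = Module.finrank K (LinearMap.ker (Phi c k d)) := by
    rw [Vd_eq_map]
    exact ((Submodule.equivMapOfInjective (phi K d) (phi_injective d) _).finrank_eq).symm
  omega

lemma HF_eq_general (I : Ideal (MvPolynomial (Fin 2) K)) (d : ℕ) :
    MonId.HF K ![1,1] I d
      + Module.finrank K
        ((homogeneousSubmodule (Fin 2) K d) ⊓ I.restrictScalars K :
          Submodule K (MvPolynomial (Fin 2) K)) = d + 1 := by
  set p : Submodule K (MvPolynomial (Fin 2) K) :=
    (homogeneousSubmodule (Fin 2) K d) with hp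
  set q := (Ideal.Quotient.mkₐ K I).toLinearMap with hq
  set ψ := q.comp p.subtype with hψ
  have hrange : LinearMap.range ψ = p.map q := by
    rw [hψ, LinearMap.range_comp, Submodule.range_subtype]
  have hker : LinearMap.ker q = I.restrictScalars K := by
    ext x
    simp only [LinearMap.mem_ker, hq, AlgHom.toLinearMap_apply, Ideal.Quotient.mkₐ_eq_mk,
      Submodule.restrictScalars_mem]
    exact Ideal.Quotient.eq_zero_iff_mem
  have hkerψ : LinearMap.ker ψ = Submodule.comap p.subtype (I.restrictScalars K) := by
    rw [hψ, LinearMap.ker_comp, hker]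
  haveI : FiniteDimensional K p := fd_Sd d
  have hrn := LinearMap.finrank_range_add_finrank_ker ψ
  have hfr : Module.finrank K p = d + 1 := finrank_Sd d
  have hk2 : Module.finrank K (LinearMap.ker ψ)
      = Module.finrank K (p ⊓ I.restrictScalars K : Submodule K (MvPolynomial (Fin 2) K)) := by
    rw [hkerψ, ← Submodule.map_comap_subtype]
    exact (Submodule.equivMapOfInjective p.subtype (Submodule.injective_subtype p)
      _).finrank_eq
  have hHF : MonId.HF K ![1,1] I d = Module.finrank K (LinearMap.range ψ) := by
    rw [hrange, MonId.HF, whs_eq]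
  rw [hHF, ← hk2, hrn, hfr]

/-! ### The monomial ideal side -/

lemma up_closed {A : Set Mon} (hA : IsMonIdeal A) (m n : ℕ) (p : Mon) (hp : p ∈ A) :
    ((p.1 + (m : ℤ), p.2 + (n : ℤ)) : Mon) ∈ A := by
  induction n with
  | zero =>
    induction m with
    | zero => simpa using hp
    | succ m ih =>
      have h2 := (hA.2.1 _ ih).1
      convert h2 using 2 <;> push_cast <;> ring
  | succ n ih =>
    have h2 := (hA.2.1 _ ih).2
    convert h2 using 2 <;> push_cast <;> ring

lemma mem_of_le {A : Set Mon} (hA : IsMonIdeal A) {p q : Mon} (hp : p ∈ A)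
    (h1 : p.1 ≤ q.1) (h2 : p.2 ≤ q.2) : q ∈ A := by
  have hq : q = ((p.1 + ((q.1 - p.1).toNat : ℤ), p.2 + ((q.2 - p.2).toNat : ℤ)) : Mon) := by
    obtain ⟨q1, q2⟩ := q
    simp only [Prod.mk.injEq]
    constructor <;> omega
  rw [hq]
  exact up_closed hA _ _ p hp

lemma monOf_eq (p : Mon) : monOf K p = monomial (ms p.1.toNat p.2.toNat) (1 : K) := by
  rw [monOf, X_pow_eq_monomial, X_pow_eq_monomial, monomial_mul, mul_one, ms]

noncomputable def Cdset (A : Set Mon) (d : ℕ) : Finset ℕ :=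
  @Finset.filter _ (fun e => ((e : ℤ), (d : ℤ) - (e : ℤ)) ∉ A) (Classical.decPred _)
    (Finset.range (d+1))

lemma mem_Cdset {A : Set Mon} {d e : ℕ} :
    e ∈ Cdset A d ↔ e ≤ d ∧ ((e : ℤ), (d : ℤ) - (e : ℤ)) ∉ A := by
  unfold Cdset
  rw [@Finset.mem_filter _ _ (Classical.decPred _), Finset.mem_range, Nat.lt_succ_iff]

lemma card_Cdset_le (A : Set Mon) (d : ℕ) : (Cdset A d).card ≤ d + 1 := by
  have h1 : Cdset A d ⊆ Finset.range (d+1) :=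
    fun x hx => Finset.mem_range.mpr (Nat.lt_succ_of_le (mem_Cdset.mp hx).1)
  calc (Cdset A d).card ≤ (Finset.range (d+1)).card := Finset.card_le_card h1
    _ = d + 1 := Finset.card_range _

lemma mem_idealOf_iff {f : MvPolynomial (Fin 2) K} :
    f ∈ idealOf K A ↔ ∀ s ∈ f.support, ∃ p ∈ A, ms p.1.toNat p.2.toNat ≤ s := by
  rw [idealOf]
  have himg : monOf K '' A
      = (fun s => monomial s (1 : K)) '' ((fun p : Mon => ms p.1.toNat p.2.toNat) '' A) := by
    rw [Set.image_image]
    exact Set.image_congr (fun p _ => monOf_eq p)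
  rw [himg, mem_ideal_span_monomial_image]
  constructor
  · intro hh s hs
    obtain ⟨si, ⟨p, hp, rfl⟩, hle⟩ := hh s hs
    exact ⟨p, hp, hle⟩
  · intro hh s hs
    obtain ⟨p, hp, hle⟩ := hh s hs
    exact ⟨_, ⟨p, hp, rfl⟩, hle⟩

lemma mem_Sd_inter_idealOf {A : Set Mon} (hA : IsMonIdeal A) {d : ℕ}
    {f : MvPolynomial (Fin 2) K} (hf : f ∈ homogeneousSubmodule (Fin 2) K d) :
    f ∈ idealOf K A ↔ ∀ e ∈ Cdset A d, coeff (ms e (d - e)) f = 0 := by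
  rw [mem_idealOf_iff]
  constructor
  · intro hmem e he
    by_contra hc
    obtain ⟨p, hp, hle⟩ := hmem _ (mem_support_iff.mpr hc)
    rw [mem_Cdset] at he
    apply he.2
    obtain ⟨hin1, hin2⟩ := hA.1 p hp
    have h0 : p.1.toNat ≤ e := by simpa using (Finsupp.le_def.mp hle) 0
    have h1 : p.2.toNat ≤ d - e := by simpa using (Finsupp.le_def.mp hle) 1
    have hed := he.1
    exact mem_of_le hA hp (by omega) (by omega)
  · intro hv s hs
    have hdeg := support_deg hf (mem_support_iff.mp hs)
    have hsle : s 0 ≤ d := by omega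
    have hmA : ((s 0 : ℤ), (d : ℤ) - (s 0 : ℤ)) ∈ A := by
      by_contra hc
      have he : s 0 ∈ Cdset A d := mem_Cdset.mpr ⟨hsle, hc⟩
      have h2 := hv _ he
      have hs1 : s 1 = d - s 0 := by omega
      rw [show ms (s 0) (d - s 0) = s from by
        rw [← hs1]; exact (eq_ms s).symm] at h2
      exact (mem_support_iff.mp hs) h2
    refine ⟨_, hmA, ?_⟩
    have e1 : ((s 0 : ℤ)).toNat = s 0 := by omega
    have e2 : ((d : ℤ) - (s 0 : ℤ)).toNat = d - s 0 := by omega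
    simp only [e1, e2]
    have hs1 : s 1 = d - s 0 := by omega
    rw [show ms (s 0) (d - s 0) = s from by rw [← hs1]; exact (eq_ms s).symm]

noncomputable def Psi (A : Set Mon) (K : Type*) [Field K] (d : ℕ) :
    (Fin (d+1) → K) →ₗ[K] (↥(Cdset A d) → K) :=
  LinearMap.pi (fun a => LinearMap.proj
    (⟨a.1, Nat.lt_succ_of_le (mem_Cdset.mp a.2).1⟩ : Fin (d+1)))

lemma Psi_surjective (A : Set Mon) (d : ℕ) : Function.Surjective (Psi A K d) := by
  classical
  intro u
  refine ⟨fun e => if h : (e : ℕ) ∈ Cdset A d then u ⟨e, h⟩ else 0, ?_⟩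
  funext a
  have h2 : ((a : ℕ)) ∈ Cdset A d := a.2
  show (fun e : Fin (d+1) => if h : (e : ℕ) ∈ Cdset A d then u ⟨(e : ℕ), h⟩ else 0) _ = u a
  simp only [dif_pos h2]

lemma inter_eq_map_kerPsi {A : Set Mon} (hA : IsMonIdeal A) (d : ℕ) :
    ((homogeneousSubmodule (Fin 2) K d) ⊓ (idealOf K A).restrictScalars K :
        Submodule K (MvPolynomial (Fin 2) K))
      = (LinearMap.ker (Psi A K d)).map (phi K d) := by
  ext f
  simp only [Submodule.mem_inf, Submodule.mem_map, Submodule.restrictScalars_mem]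
  constructor
  · rintro ⟨h1, h2⟩
    refine ⟨fun e => coeff (ms e (d - e)) f, ?_, phi_surj h1⟩
    rw [LinearMap.mem_ker]
    funext a
    exact (mem_Sd_inter_idealOf hA h1).mp h2 a.1 a.2
  · rintro ⟨v, hv, rfl⟩
    refine ⟨phi_mem d v, (mem_Sd_inter_idealOf hA (phi_mem d v)).mpr ?_⟩
    intro e he
    have hed : e ≤ d := (mem_Cdset.mp he).1
    rw [coeff_phi, dif_pos (by omega)]
    exact congrFun (LinearMap.mem_ker.mp hv) ⟨e, he⟩

lemma finrank_inter {A : Set Mon} (hA : IsMonIdeal A) (d : ℕ) :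
    Module.finrank K ((homogeneousSubmodule (Fin 2) K d) ⊓ (idealOf K A).restrictScalars K :
        Submodule K (MvPolynomial (Fin 2) K)) = d + 1 - (Cdset A d).card := by
  rw [inter_eq_map_kerPsi hA d,
    ← (Submodule.equivMapOfInjective (phi K d) (phi_injective d) _).finrank_eq]
  have hrn := LinearMap.finrank_range_add_finrank_ker (Psi A K d)
  rw [LinearMap.range_eq_top.mpr (Psi_surjective A d), finrank_top, Module.finrank_pi,
    Module.finrank_pi, Fintype.card_fin, Fintype.card_coe] at hrn
  omega

lemma HF_idealOf {A : Set Mon} (hA : IsMonIdeal A) (d : ℕ) :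
    MonId.HF K ![1,1] (idealOf K A) d = (Cdset A d).card := by
  have h1 := HF_eq_general (idealOf K A) d
  rw [finrank_inter hA d] at h1
  have h2 := card_Cdset_le A d
  omega


lemma Cdset_empty_of_large {A : Set Mon} (hA : IsMonIdeal A) :
    ∃ D : ℕ, ∀ d, D < d → Cdset A d = ∅ := by
  refine ⟨(hA.2.2.toFinset).sup (fun p => (p.1 + p.2).toNat), fun d hd => ?_⟩
  rw [Finset.eq_empty_iff_forall_notMem]
  intro e he
  rw [mem_Cdset] at he
  have hmem : (((e : ℤ), (d : ℤ) - (e : ℤ)) : Mon) ∈ {p : Mon | inS p ∧ p ∉ A} := by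
    refine ⟨⟨by simp, ?_⟩, he.2⟩
    have := he.1
    simp only []
    omega
  have hF : (((e : ℤ), (d : ℤ) - (e : ℤ)) : Mon) ∈ hA.2.2.toFinset :=
    hA.2.2.mem_toFinset.mpr hmem
  have hle := Finset.le_sup (f := fun p : Mon => (p.1 + p.2).toNat) hF
  simp only [] at hle
  omega

lemma Cdset_card_mono {A : Set Mon} (hA : IsMonIdeal A) {d : ℕ}
    (hd : (Cdset A d).card ≤ d) :
    (Cdset A (d+1)).card ≤ (Cdset A d).card := by
  have hex : ∃ a ≤ d, (((a : ℤ), (d : ℤ) - (a : ℤ)) : Mon) ∈ A := by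
    by_contra hc
    push_neg at hc
    have hsub : Finset.range (d+1) ⊆ Cdset A d := fun e he =>
      mem_Cdset.mpr ⟨Nat.lt_succ_iff.mp (Finset.mem_range.mp he),
        hc e (Nat.lt_succ_iff.mp (Finset.mem_range.mp he))⟩
    have := Finset.card_le_card hsub
    rw [Finset.card_range] at this
    omega
  obtain ⟨a₀, ha₀d, ha₀⟩ := hex
  apply Finset.card_le_card_of_injOn (fun e => if a₀ < e then e - 1 else e)
  · intro e he
    simp only [Finset.mem_coe] at he ⊢
    rw [mem_Cdset] at he
    obtain ⟨he1, he2⟩ := he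
    by_cases hcase : a₀ < e
    · rw [if_pos hcase, mem_Cdset]
      refine ⟨by omega, fun hmem => he2 (mem_of_le hA hmem ?_ ?_)⟩
      · show ((e - 1 : ℕ) : ℤ) ≤ ((e : ℕ) : ℤ)
        omega
      · show (d : ℤ) - ((e - 1 : ℕ) : ℤ) ≤ ((d + 1 : ℕ) : ℤ) - ((e : ℕ) : ℤ)
        omega
    · rw [if_neg hcase, mem_Cdset]
      refine ⟨by omega, fun hmem => he2 (mem_of_le hA hmem ?_ ?_)⟩
      · show ((e : ℕ) : ℤ) ≤ ((e : ℕ) : ℤ)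
        omega
      · show (d : ℤ) - ((e : ℕ) : ℤ) ≤ ((d + 1 : ℕ) : ℤ) - ((e : ℕ) : ℤ)
        omega
  · intro x hx y hy hxy
    simp only [Finset.mem_coe, mem_Cdset] at hx hy
    simp only [] at hxy
    by_cases h1 : a₀ < x <;> by_cases h2 : a₀ < y
    · rw [if_pos h1, if_pos h2] at hxy; omega
    · rw [if_pos h1, if_neg h2] at hxy
      exfalso
      have hya : y = a₀ := by omega
      apply hy.2
      rw [hya]
      refine mem_of_le hA ha₀ ?_ ?_
      · show ((a₀ : ℕ) : ℤ) ≤ ((a₀ : ℕ) : ℤ); omega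
      · show (d : ℤ) - ((a₀ : ℕ) : ℤ) ≤ ((d + 1 : ℕ) : ℤ) - ((a₀ : ℕ) : ℤ); omega
    · rw [if_neg h1, if_pos h2] at hxy
      exfalso
      have hxa : x = a₀ := by omega
      apply hx.2
      rw [hxa]
      refine mem_of_le hA ha₀ ?_ ?_
      · show ((a₀ : ℕ) : ℤ) ≤ ((a₀ : ℕ) : ℤ); omega
      · show (d : ℤ) - ((a₀ : ℕ) : ℤ) ≤ ((d + 1 : ℕ) : ℤ) - ((a₀ : ℕ) : ℤ); omega
    · rw [if_neg h1, if_neg h2] at hxy; omega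


/-! ### The generic ideal -/

noncomputable def Isub (c : ℕ → K) (h : ℕ → ℕ) : Submodule K (MvPolynomial (Fin 2) K) :=
  ⨆ d, Vd c (h d) d

lemma homogComp_mem_Vd {c : ℕ → K} {h : ℕ → ℕ} {f : MvPolynomial (Fin 2) K}
    (hf : f ∈ Isub c h) (d : ℕ) :
    homogeneousComponent d f ∈ Vd c (h d) d := by
  refine Submodule.iSup_induction (motive := fun x => homogeneousComponent d x ∈ Vd c (h d) d)
    _ hf ?_ ?_ ?_
  · intro e x hx
    have hx1 := (mem_Vd_iff.mp hx).1
    rw [homogeneousComponent_of_mem hx1]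
    split
    · rename_i hde; subst hde; exact hx
    · exact zero_mem _
  · show homogeneousComponent d (0 : MvPolynomial (Fin 2) K) ∈ Vd c (h d) d
    rw [map_zero]; exact zero_mem _
  · intro x y hx hy
    show homogeneousComponent d (x + y) ∈ Vd c (h d) d
    rw [map_add]; exact add_mem hx hy

lemma mem_Vd_of_homog {c : ℕ → K} {h : ℕ → ℕ} {d : ℕ} {f : MvPolynomial (Fin 2) K}
    (hf : f ∈ homogeneousSubmodule (Fin 2) K d) (hI : f ∈ Isub c h) :
    f ∈ Vd c (h d) d := by
  have h2 := homogComp_mem_Vd hI d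
  rwa [homogeneousComponent_of_mem hf, if_pos rfl] at h2

lemma X_mul_Vd {c : ℕ → K} {k k' d : ℕ} (hk : k' ≤ k) (j : Fin 2)
    {f : MvPolynomial (Fin 2) K} (hf : f ∈ Vd c k d) : X j * f ∈ Vd c k' (d+1) := by
  rw [mem_Vd_iff] at hf ⊢
  obtain ⟨h1, h2⟩ := hf
  constructor
  · rw [mem_homogeneousSubmodule] at h1 ⊢
    have h3 := (isHomogeneous_X K j).mul h1
    rwa [add_comm] at h3
  · intro i
    have h3 := h2 ⟨i, lt_of_lt_of_le i.isLt hk⟩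
    rw [ev_mul_X, h3, mul_zero]

lemma X_mul_mem_Isub {c : ℕ → K} {h : ℕ → ℕ}
    (hOr : ∀ d, h (d+1) ≤ h d ∨ Vd c (h d) d = ⊥) (j : Fin 2)
    {f : MvPolynomial (Fin 2) K} (hf : f ∈ Isub c h) : X j * f ∈ Isub c h := by
  have hrep : X j * f
      = ∑ i ∈ Finset.range (f.totalDegree + 1), X j * homogeneousComponent i f := by
    rw [← Finset.mul_sum, sum_homogeneousComponent]
  rw [hrep]
  apply Submodule.sum_mem
  intro d _
  have hd := homogComp_mem_Vd hf d
  rcases hOr d with hle | hbot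
  · exact Submodule.mem_iSup_of_mem (d+1) (X_mul_Vd hle j hd)
  · rw [hbot, Submodule.mem_bot] at hd
    rw [hd, mul_zero]
    exact zero_mem _

lemma mul_mem_Isub {c : ℕ → K} {h : ℕ → ℕ}
    (hOr : ∀ d, h (d+1) ≤ h d ∨ Vd c (h d) d = ⊥)
    (r : MvPolynomial (Fin 2) K) {f : MvPolynomial (Fin 2) K}
    (hf : f ∈ Isub c h) : r * f ∈ Isub c h := by
  induction r using MvPolynomial.induction_on generalizing f with
  | C a => rw [C_mul']; exact Submodule.smul_mem _ a hf
  | add p q hp hq => rw [add_mul]; exact add_mem (hp hf) (hq hf)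
  | mul_X p n hp => rw [mul_assoc]; exact hp (X_mul_mem_Isub hOr n hf)

noncomputable def bigI (c : ℕ → K) (h : ℕ → ℕ)
    (hOr : ∀ d, h (d+1) ≤ h d ∨ Vd c (h d) d = ⊥) : Ideal (MvPolynomial (Fin 2) K) where
  carrier := Isub c h
  add_mem' := fun ha hb => (Isub c h).add_mem ha hb
  zero_mem' := (Isub c h).zero_mem
  smul_mem' := fun r f hf => by
    rw [smul_eq_mul]
    exact mul_mem_Isub hOr r hf

lemma mem_bigI_iff {c : ℕ → K} {h : ℕ → ℕ}
    {hOr : ∀ d, h (d+1) ≤ h d ∨ Vd c (h d) d = ⊥} {f : MvPolynomial (Fin 2) K} :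
    f ∈ bigI c h hOr ↔ f ∈ Isub c h := Iff.rfl


lemma Vd_support_card {u : K} {k d : ℕ}
    (hupow : ∀ a b : ℕ, a ≤ d → b ≤ d → u ^ a = u ^ b → a = b)
    {f : MvPolynomial (Fin 2) K} (hf : f ∈ Vd (fun i => u ^ i) k d) (hf0 : f ≠ 0) :
    k + 1 ≤ f.support.card := by
  by_contra hcard
  push_neg at hcard
  obtain ⟨h1, h2⟩ := mem_Vd_iff.mp hf
  set t := f.support.card with ht
  set E : Fin t ≃ {x // x ∈ f.support} := f.support.equivFin.symm with hE
  set vv : Fin t → K := fun j => coeff (E j : Fin 2 →₀ ℕ) f with hvvdef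
  set ff : Fin t → K := fun j => u ^ (((E j : Fin 2 →₀ ℕ)) 0) with hffdef
  have hffinj : Function.Injective ff := by
    intro a b hab
    have ha := support_deg h1 (mem_support_iff.mp (E a).2)
    have hb := support_deg h1 (mem_support_iff.mp (E b).2)
    have h0 : ((E a : Fin 2 →₀ ℕ)) 0 = ((E b : Fin 2 →₀ ℕ)) 0 :=
      hupow _ _ (by omega) (by omega) hab
    apply E.injective
    apply Subtype.ext
    rw [eq_ms ((E a : Fin 2 →₀ ℕ)), eq_ms ((E b : Fin 2 →₀ ℕ)), h0]
    congr 1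
    omega
  have hzero : ∀ i : Fin t, ∑ j, vv j * ff j ^ (i : ℕ) = 0 := by
    intro i
    have hev := h2 ⟨(i : ℕ), lt_of_lt_of_le i.isLt (by omega)⟩
    rw [ev_apply, eval_eq'] at hev
    simp only [Fin.prod_univ_two, Matrix.cons_val_zero, Matrix.cons_val_one,
      Matrix.head_cons, one_pow, mul_one] at hev
    calc ∑ j : Fin t, vv j * ff j ^ (i : ℕ)
        = ∑ s : {x // x ∈ f.support},
            coeff (s : Fin 2 →₀ ℕ) f * (u ^ ((s : Fin 2 →₀ ℕ) 0)) ^ (i : ℕ) :=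
          Equiv.sum_comp E
            (fun s => coeff (s : Fin 2 →₀ ℕ) f * (u ^ ((s : Fin 2 →₀ ℕ) 0)) ^ (i : ℕ))
      _ = ∑ s ∈ f.support, coeff s f * (u ^ (s 0)) ^ (i : ℕ) :=
          Finset.sum_coe_sort f.support (fun s => coeff s f * (u ^ (s 0)) ^ (i : ℕ))
      _ = 0 := by
          rw [Finset.sum_congr rfl
            (fun s _ => by rw [pow_right_comm] :
              ∀ s ∈ f.support, coeff s f * (u ^ (s 0)) ^ (i : ℕ)
                = coeff s f * (u ^ (i : ℕ)) ^ (s 0))]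
          exact hev
  have hvv : vv = 0 := Matrix.eq_zero_of_forall_pow_sum_mul_pow_eq_zero hffinj hzero
  obtain ⟨s, hs⟩ : f.support.Nonempty := by
    rw [Finset.nonempty_iff_ne_empty]
    intro hemp
    exact hf0 (by rwa [MvPolynomial.support_eq_empty] at hemp)
  have hcoeff : coeff s f = 0 := by
    have h3 := congrFun hvv (E.symm ⟨s, hs⟩)
    simpa [hvvdef] using h3
  exact (mem_support_iff.mp hs) hcoeff

lemma exists_pow_inj (K : Type*) [Field K] [Infinite K] (D : ℕ) :
    ∃ u : K, ∀ a b : ℕ, a ≤ D → b ≤ D → u ^ a = u ^ b → a = b := by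
  classical
  set Bad : Set K := {x : K | x = 0 ∨ ∃ m, 1 ≤ m ∧ m ≤ D ∧ x ^ m = 1} with hBadDef
  set P : Polynomial K := Polynomial.X * ∏ m ∈ Finset.Icc 1 D, (Polynomial.X ^ m - 1) with hP
  have hPne : P ≠ 0 := by
    rw [hP]
    apply mul_ne_zero Polynomial.X_ne_zero
    rw [Finset.prod_ne_zero_iff]
    intro m hm
    intro hzero
    have hm1 : 1 ≤ m := (Finset.mem_Icc.mp hm).1
    have := congrArg (Polynomial.eval 0) hzero
    simp [Polynomial.eval_pow, zero_pow (by omega : m ≠ 0)] at this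
  have hsub : Bad ⊆ {x | P.IsRoot x} := by
    intro x hx
    rcases hx with hx0 | ⟨m, hm1, hmD, hxm⟩
    · simp [Polynomial.IsRoot, hP, hx0]
    · simp only [Polynomial.IsRoot, hP, Polynomial.eval_mul, Polynomial.eval_X, Set.mem_setOf_eq]
      apply mul_eq_zero_of_right
      rw [Polynomial.eval_prod]
      apply Finset.prod_eq_zero (Finset.mem_Icc.mpr ⟨hm1, hmD⟩)
      simp [hxm]
  have hBadFin : Bad.Finite := (Polynomial.finite_setOf_isRoot hPne).subset hsub
  obtain ⟨u, hu⟩ := hBadFin.infinite_compl.nonempty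
  have hu0 : u ≠ 0 := fun hx => hu (Or.inl hx)
  have huroot : ∀ m, 1 ≤ m → m ≤ D → u ^ m ≠ 1 := fun m h1 h2 hroot =>
    hu (Or.inr ⟨m, h1, h2, hroot⟩)
  refine ⟨u, fun a b ha hb hab => ?_⟩
  rcases Nat.lt_trichotomy a b with hlt | heq | hgt
  · exfalso
    apply huroot (b - a) (by omega) (by omega)
    have : u ^ a * u ^ (b - a) = u ^ a * 1 := by
      rw [mul_one, ← pow_add]
      rw [show a + (b - a) = b by omega]
      exact hab.symm
    exact mul_left_cancel₀ (pow_ne_zero a hu0) this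
  · exact heq
  · exfalso
    apply huroot (a - b) (by omega) (by omega)
    have : u ^ b * u ^ (a - b) = u ^ b * 1 := by
      rw [mul_one, ← pow_add]
      rw [show b + (a - b) = a by omega]
      exact hab
    exact mul_left_cancel₀ (pow_ne_zero b hu0) this


lemma fd_Vd (c : ℕ → K) (k d : ℕ) : FiniteDimensional K (Vd c k d) := by
  rw [Vd_eq_map]
  exact Module.Finite.map _ _

end GenAux

theorem generic_tropicalization_is_uniform
    (K : Type*) [Field K] [Infinite K]
    (h : ℕ → ℕ)
    (A : Set Mon) (hA : IsMonIdeal A)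
    (hHA : ∀ d : ℕ, HF K ![1, 1] (idealOf K A) d = h d) :
    ∃ I : Ideal (MvPolynomial (Fin 2) K),
      (∀ f ∈ I, ∀ d : ℕ, MvPolynomial.homogeneousComponent d f ∈ I) ∧
      (∀ d : ℕ, HF K ![1, 1] I d = h d) ∧
      (∀ d : ℕ, ∀ f ∈ I, f.IsHomogeneous d → f ≠ 0 →
        h d + 1 ≤ f.support.card) := by
  classical
  open GenAux in
  have hcount : ∀ d, h d = (Cdset A d).card := fun d => by
    rw [← hHA d, HF_idealOf hA d]
  have hle : ∀ d, h d ≤ d + 1 := fun d => (hcount d) ▸ card_Cdset_le A d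
  obtain ⟨D, hD⟩ := Cdset_empty_of_large hA
  have hzero : ∀ d, D < d → h d = 0 := fun d hd => by
    rw [hcount d, hD d hd, Finset.card_empty]
  have hmac : ∀ d, h d ≤ d → h (d+1) ≤ h d := fun d hhd => by
    rw [hcount d, hcount (d+1)]
    exact Cdset_card_mono hA (by rw [← hcount d]; exact hhd)
  obtain ⟨u, hu⟩ := exists_pow_inj K D
  set c : ℕ → K := fun i => u ^ i with hc
  have hbound : ∀ d, h d ≤ D + 1 := by
    intro d
    by_cases hdD : d ≤ D
    · exact le_trans (hle d) (by omega)
    · rw [hzero d (by omega)]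
      omega
  have hinj : ∀ d : ℕ, Function.Injective (fun i : Fin (h d) => c i) := by
    intro d i j hij
    have hiD : (i : ℕ) ≤ D := by have := i.isLt; have := hbound d; omega
    have hjD : (j : ℕ) ≤ D := by have := j.isLt; have := hbound d; omega
    exact Fin.ext (hu _ _ hiD hjD hij)
  have hOr : ∀ d, h (d+1) ≤ h d ∨ Vd c (h d) d = ⊥ := by
    intro d
    by_cases hcase : h d ≤ d
    · exact Or.inl (hmac d hcase)
    · right
      have hdd : h d = d + 1 := le_antisymm (hle d) (by omega)
      have hfr := finrank_Vd (le_of_eq hdd) (hinj d)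
      haveI := fd_Vd c (h d) d
      rw [← Submodule.finrank_eq_zero (R := K)]
      omega
  refine ⟨bigI c h hOr, ?_, ?_, ?_⟩
  · intro f hf d
    exact mem_bigI_iff.mpr (Submodule.mem_iSup_of_mem d (homogComp_mem_Vd (mem_bigI_iff.mp hf) d))
  · intro d
    have hHFeq := HF_eq_general (bigI c h hOr) d
    have hinter : ((homogeneousSubmodule (Fin 2) K d)
        ⊓ (bigI c h hOr).restrictScalars K : Submodule K (MvPolynomial (Fin 2) K))
        = Vd c (h d) d := by
      apply le_antisymm
      · intro f hf
        obtain ⟨hf1, hf2⟩ := Submodule.mem_inf.mp hf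
        exact mem_Vd_of_homog hf1 hf2
      · intro f hf
        refine Submodule.mem_inf.mpr ⟨(mem_Vd_iff.mp hf).1, ?_⟩
        rw [Submodule.restrictScalars_mem]
        exact mem_bigI_iff.mpr (Submodule.mem_iSup_of_mem d hf)
    rw [hinter, finrank_Vd (hle d) (hinj d)] at hHFeq
    have := hle d
    omega
  · intro d f hf hfhom hf0
    have hfV : f ∈ Vd c (h d) d :=
      mem_Vd_of_homog ((mem_homogeneousSubmodule _ _).mpr hfhom) (mem_bigI_iff.mp hf)
    by_cases hdD : d ≤ D
    · exact Vd_support_card (fun a b ha hb => hu a b (by omega) (by omega)) hfV hf0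
    · have h0 := hzero d (by omega)
      rw [h0]
      have hne : f.support.Nonempty := by
        rw [Finset.nonempty_iff_ne_empty]
        intro hemp
        exact hf0 (by rwa [MvPolynomial.support_eq_empty] at hemp)
      have := Finset.card_pos.mpr hne
      omega
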